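/- Let C = a·(M+1)·(e^{aL}·(1 + aL) − 1)/4. Then for every m ∈ ℕ and every k ∈ ℕ with k ≤ 2^m, the consecutive refinements of the Euler scheme at the dyadic point a·k/2^m satisfy |X^{m+1}_{2k} − X^m_k| ≤ C/2^m. -/

import Mathlib

open Filter Topology Set

/-- With C = a·(M+1)·(e^{aL}·(1+aL) − 1)/4, for every m and k ≤ 2^m,
|X^{m+1}_{2k} − X^m_k| ≤ C/2^m. -/
theorem euler_refinement_estimate
    (a M L x₀ : ℝ) (ha : 0 < a) (hM : 0 < M) (hL : 0 < L)
    (U : Set (ℝ × ℝ))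
    (hU : U = Set.Icc (0 : ℝ) a ×ˢ Set.Icc (x₀ - M * a) (x₀ + M * a))
    (f : ℝ × ℝ → ℝ)
    (hf_lip : ∀ u ∈ U, ∀ v ∈ U, |f u - f v| ≤ L * (|u.1 - v.1| + |u.2 - v.2|))
    (hf_bdd : ∀ u ∈ U, |f u| ≤ M)
    (X : ℕ → ℕ → ℝ)
    (hX0 : ∀ m, X m 0 = x₀)
    (hXs : ∀ m k, X m (k + 1) = X m k + a / 2 ^ m * f (a * k / 2 ^ m, X m k))
    (C : ℝ) (hC : C = a * (M + 1) * (Real.exp (a * L) * (1 + a * L) - 1) / 4) :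
    ∀ m k : ℕ, k ≤ 2 ^ m → |X (m + 1) (2 * k) - X m k| ≤ C / 2 ^ m := by
  -- boundedness of the iterates
  have hbdd : ∀ n j, j ≤ 2 ^ n → |X n j - x₀| ≤ M * (a * j / 2 ^ n) := by
    intro n j
    have h2 : (0:ℝ) < (2:ℝ) ^ n := by positivity
    induction j with
    | zero => intro _; simp [hX0]
    | succ j ih =>
      intro hj
      have hj' : j ≤ 2 ^ n := by omega
      have hb := ih hj'
      have hjr : (j : ℝ) ≤ 2 ^ n := by exact_mod_cast hj'
      have hmem : (a * j / 2 ^ n, X n j) ∈ U := by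
        rw [hU]
        constructor
        · constructor
          · positivity
          · rw [div_le_iff₀ h2]
            nlinarith
        · have h1 : M * (a * j / 2 ^ n) ≤ M * a := by
            have : a * j / 2 ^ n ≤ a := by rw [div_le_iff₀ h2]; nlinarith
            nlinarith
          have := abs_le.mp hb
          constructor <;> [linarith [this.1]; linarith [this.2]]
      have hfb : |f (a * j / 2 ^ n, X n j)| ≤ M := hf_bdd _ hmem
      rw [hXs]
      have : |X n j + a / 2 ^ n * f (a * j / 2 ^ n, X n j) - x₀|
          ≤ |X n j - x₀| + (a / 2 ^ n) * |f (a * j / 2 ^ n, X n j)| := by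
        have h1 : X n j + a / 2 ^ n * f (a * j / 2 ^ n, X n j) - x₀
            = (X n j - x₀) + (a / 2 ^ n) * f (a * j / 2 ^ n, X n j) := by ring
        rw [h1]
        calc |(X n j - x₀) + (a / 2 ^ n) * f (a * j / 2 ^ n, X n j)|
            ≤ |X n j - x₀| + |(a / 2 ^ n) * f (a * j / 2 ^ n, X n j)| := abs_add_le _ _
          _ = |X n j - x₀| + (a / 2 ^ n) * |f (a * j / 2 ^ n, X n j)| := by
              rw [abs_mul, abs_of_pos (show (0:ℝ) < a / 2 ^ n by positivity)]
      have hstep : (a / 2 ^ n) * |f (a * j / 2 ^ n, X n j)| ≤ (a / 2 ^ n) * M := by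
        have : (0:ℝ) ≤ a / 2 ^ n := by positivity
        nlinarith
      have hgoal : M * (a * j / 2 ^ n) + (a / 2 ^ n) * M = M * (a * (j+1 : ℕ) / 2 ^ n) := by
        push_cast
        field_simp
      calc |X n j + a / 2 ^ n * f (a * j / 2 ^ n, X n j) - x₀|
          ≤ |X n j - x₀| + (a / 2 ^ n) * |f (a * j / 2 ^ n, X n j)| := this
        _ ≤ M * (a * j / 2 ^ n) + (a / 2 ^ n) * M := by linarith
        _ = M * (a * (j+1 : ℕ) / 2 ^ n) := hgoal
  -- membership of the Euler points
  have hmem : ∀ (n : ℕ) (j : ℕ), j ≤ 2 ^ n → (a * (j:ℝ) / 2 ^ n, X n j) ∈ U := by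
    intro n j hj
    have h2 : (0:ℝ) < (2:ℝ) ^ n := by positivity
    have hjr : (j : ℝ) ≤ 2 ^ n := by exact_mod_cast hj
    have hb := hbdd n j hj
    rw [hU]
    constructor
    · constructor
      · positivity
      · rw [div_le_iff₀ h2]; nlinarith
    · have h1 : M * (a * j / 2 ^ n) ≤ M * a := by
        have : a * j / 2 ^ n ≤ a := by rw [div_le_iff₀ h2]; nlinarith
        nlinarith
      have := abs_le.mp hb
      constructor <;> [linarith [this.1]; linarith [this.2]]
  intro m k hk
  have h2 : (0:ℝ) < (2:ℝ) ^ m := by positivity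
  set h : ℝ := a / 2 ^ m with hh
  have hhpos : 0 < h := by positivity
  have hh' : a / 2 ^ (m+1) = h / 2 := by
    rw [hh]; rw [pow_succ]; ring
  have hhL : (0:ℝ) < h * L := mul_pos hhpos hL
  -- main induction: |e_k| ≤ h(M+1)/4 * ((1+hL)^k - 1)
  have key : ∀ j, j ≤ 2 ^ m →
      |X (m + 1) (2 * j) - X m j| ≤ h * (M + 1) / 4 * ((1 + h * L) ^ j - 1) := by
    intro j
    induction j with
    | zero => intro _; simp [hX0]
    | succ j ih =>
      intro hj
      have hj' : j ≤ 2 ^ m := by omega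
      have he := ih hj'
      set e := X (m + 1) (2 * j) - X m j with hedef
      set t := a * j / 2 ^ m with htdef
      -- dyadic point identities
      have ht1 : a * (2 * j : ℕ) / 2 ^ (m+1) = t := by
        rw [htdef]; push_cast; rw [pow_succ]; ring
      have ht2 : a * (2 * j + 1 : ℕ) / 2 ^ (m+1) = t + h / 2 := by
        rw [htdef, hh]; push_cast; rw [pow_succ]; field_simp
      -- memberships
      have hmA : (t, X m j) ∈ U := hmem m j hj'
      have hmB : (t, X (m+1) (2*j)) ∈ U := by
        have := hmem (m+1) (2*j) (by have hps : (2:ℕ)^(m+1) = 2^m*2 := pow_succ 2 m; omega)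
        rwa [ht1] at this
      have hmC : (t + h / 2, X (m+1) (2*j+1)) ∈ U := by
        have := hmem (m+1) (2*j+1) (by have hps : (2:ℕ)^(m+1) = 2^m*2 := pow_succ 2 m; omega)
        rwa [ht2] at this
      set Y := X (m+1) (2*j) with hYdef
      set Z := X (m+1) (2*j+1) with hZdef
      have hZ : Z = Y + h / 2 * f (t, Y) := by
        rw [hZdef, hYdef, hXs, ht1, hh']
      have hnext : X (m+1) (2*(j+1)) = Z + h / 2 * f (t + h/2, Z) := by
        have : 2*(j+1) = (2*j+1) + 1 := by ring
        rw [this, hXs, ht2, hh']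
      have hXm : X m (j+1) = X m j + h * f (t, X m j) := by
        rw [hXs, ← htdef, ← hh]
      -- bounds on f differences
      have hfY : |f (t, Y) - f (t, X m j)| ≤ L * |e| := by
        have := hf_lip _ hmB _ hmA
        simp only [sub_self, abs_zero] at this
        calc |f (t, Y) - f (t, X m j)| ≤ L * (0 + |Y - X m j|) := this
          _ = L * |e| := by rw [hedef]; ring_nf
      have hfYb : |f (t, Y)| ≤ M := hf_bdd _ hmB
      have hfZ : |f (t + h/2, Z) - f (t, X m j)| ≤ L * (h/2 + |e| + h/2 * M) := by
        have hl := hf_lip _ hmC _ hmA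
        simp only at hl
        have h1 : |t + h/2 - t| = h/2 := by
          rw [show t + h/2 - t = h/2 by ring, abs_of_pos (by positivity)]
        have h2' : |Z - X m j| ≤ |e| + h/2 * M := by
          rw [hZ]
          have : Y + h/2 * f (t, Y) - X m j = e + h/2 * f (t, Y) := by
            rw [hedef]; ring
          rw [this]
          calc |e + h/2 * f (t, Y)| ≤ |e| + |h/2 * f (t, Y)| := abs_add_le _ _
            _ = |e| + h/2 * |f (t, Y)| := by
                rw [abs_mul, abs_of_pos (show (0:ℝ) < h/2 by positivity)]
            _ ≤ |e| + h/2 * M := by gcongr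
        rw [h1] at hl
        calc |f (t + h/2, Z) - f (t, X m j)| ≤ L * (h/2 + |Z - X m j|) := hl
          _ ≤ L * (h/2 + (|e| + h/2 * M)) := by gcongr
          _ = L * (h/2 + |e| + h/2 * M) := by ring
      -- recursive estimate
      have hrec : |X (m+1) (2*(j+1)) - X m (j+1)|
          ≤ (1 + h * L) * |e| + h ^ 2 * L * (M + 1) / 4 := by
        have heq : X (m+1) (2*(j+1)) - X m (j+1)
            = e + h/2 * (f (t, Y) - f (t, X m j))
              + h/2 * (f (t + h/2, Z) - f (t, X m j)) := by
          rw [hnext, hZ, hXm, hedef]; ring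
        rw [heq]
        calc |e + h/2 * (f (t, Y) - f (t, X m j))
              + h/2 * (f (t + h/2, Z) - f (t, X m j))|
            ≤ |e| + h/2 * |f (t, Y) - f (t, X m j)|
              + h/2 * |f (t + h/2, Z) - f (t, X m j)| := by
              have := abs_add_le (e + h/2 * (f (t, Y) - f (t, X m j)))
                (h/2 * (f (t + h/2, Z) - f (t, X m j)))
              have h2a := abs_add_le e (h/2 * (f (t, Y) - f (t, X m j)))
              rw [abs_mul, abs_of_pos (show (0:ℝ) < h/2 by positivity)] at this h2a
              linarith
          _ ≤ |e| + h/2 * (L * |e|) + h/2 * (L * (h/2 + |e| + h/2 * M)) := by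
              gcongr
          _ = (1 + h * L) * |e| + h ^ 2 * L * (M + 1) / 4 := by ring
      refine hrec.trans ?_
      have hmul : (1 + h * L) * |e| ≤ (1 + h * L) * (h * (M + 1) / 4 * ((1 + h * L) ^ j - 1)) :=
        mul_le_mul_of_nonneg_left he (by linarith)
      have heqR : h * (M + 1) / 4 * ((1 + h * L) ^ (j+1) - 1)
          = (1 + h * L) * (h * (M + 1) / 4 * ((1 + h * L) ^ j - 1)) + h ^ 2 * L * (M + 1) / 4 := by
        rw [pow_succ]; ring
      linarith
  -- conclude
  have hkey := key k hk
  refine hkey.trans ?_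
  have hpow1 : (1 + h * L) ^ k ≤ (1 + h * L) ^ (2 ^ m) :=
    pow_le_pow_right₀ (by linarith) hk
  have hexp : (1 + h * L) ^ (2 ^ m) ≤ Real.exp (a * L) := by
    have h1 : 1 + h * L ≤ Real.exp (h * L) := by
      have := Real.add_one_le_exp (h * L)
      linarith
    have h2' : (1 + h * L) ^ (2 ^ m) ≤ Real.exp (h * L) ^ (2 ^ m) :=
      pow_le_pow_left₀ (by linarith) h1 _
    have h3 : Real.exp (h * L) ^ (2 ^ m) = Real.exp ((2 ^ m : ℕ) * (h * L)) := by
      rw [Real.exp_nat_mul]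
    have h4 : ((2 ^ m : ℕ) : ℝ) * (h * L) = a * L := by
      push_cast
      rw [hh]; field_simp
    rw [h3, h4] at h2'
    exact h2'
  have hexp2 : Real.exp (a * L) ≤ Real.exp (a * L) * (1 + a * L) := by
    have h5 := mul_pos (Real.exp_pos (a * L)) (mul_pos ha hL)
    nlinarith [h5]
  have hCC : C / 2 ^ m = h * (M + 1) / 4 * (Real.exp (a * L) * (1 + a * L) - 1) := by
    rw [hC, hh]
    have h2ne : ((2:ℝ) ^ m) ≠ 0 := ne_of_gt h2
    field_simp
  rw [hCC]
  have hfin : (1 + h * L) ^ k - 1 ≤ Real.exp (a * L) * (1 + a * L) - 1 := by linarith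
  have := mul_le_mul_of_nonneg_left hfin (show (0:ℝ) ≤ h * (M + 1) / 4 by positivity)
  linarith
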